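/- Let p(x,y) = A x⁸ + B x⁶y² + C x⁴y⁴ + B x²y⁶ + A y⁸ be an even symmetric binary octic form. Then p is a finite sum of fourth powers of real binary quadratic forms if and only if either (A = B = 0 and C ≥ 0) or (A > 0, B ≥ −4A, and 36AC ≥ B² − 64AB − 56A²). In particular, x⁸ + αx⁴y⁴ + y⁸ is a finite sum of fourth powers of real binary quadratic forms if and only if α ≥ −14/9. -/

import Mathlib

open MvPolynomial

/-- The even symmetric binary octic `a x⁸ + b x⁶y² + c x⁴y⁴ + b x²y⁶ + a y⁸`. -/
noncomputable def evenOctic (a b c : ℝ) : MvPolynomial (Fin 2) ℝ :=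
  MvPolynomial.C a * X 0 ^ 8 + MvPolynomial.C b * X 0 ^ 6 * X 1 ^ 2 +
    MvPolynomial.C c * X 0 ^ 4 * X 1 ^ 4 + MvPolynomial.C b * X 0 ^ 2 * X 1 ^ 6 +
    MvPolynomial.C a * X 1 ^ 8

/-- `p` is a finite sum of fourth powers of real binary quadratic forms. -/
def IsSumFourthPowersQuadratics (p : MvPolynomial (Fin 2) ℝ) : Prop :=
  ∃ (s : ℕ) (h : Fin s → MvPolynomial (Fin 2) ℝ),
    (∀ k, (h k).IsHomogeneous 2) ∧ p = ∑ k, (h k) ^ 4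

section Auxiliary

lemma deg2 (m : Fin 2 →₀ ℕ) : m.degree = m 0 + m 1 := by
  rw [Finsupp.degree_apply, Finset.sum_subset (Finset.subset_univ _)
    (fun i _ hi => Finsupp.notMem_support_iff.mp hi), Fin.sum_univ_two]

lemma quadHom (p q r : ℝ) :
    (MvPolynomial.C p * X 0 ^ 2 + MvPolynomial.C q * X 0 * X 1 +
      MvPolynomial.C r * X 1 ^ 2 : MvPolynomial (Fin 2) ℝ).IsHomogeneous 2 := by
  apply MvPolynomial.IsHomogeneous.add
  apply MvPolynomial.IsHomogeneous.add
  · exact ((isHomogeneous_X ℝ 0).pow 2).C_mul p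
  · simpa [mul_assoc] using
      (((isHomogeneous_X ℝ (0 : Fin 2)).mul (isHomogeneous_X ℝ 1)).C_mul q)
  · exact ((isHomogeneous_X ℝ 1).pow 2).C_mul r

lemma quadStruct (h : MvPolynomial (Fin 2) ℝ) (hh : h.IsHomogeneous 2) :
    ∃ p q r : ℝ, h = MvPolynomial.C p * X 0 ^ 2 + MvPolynomial.C q * X 0 * X 1 +
      MvPolynomial.C r * X 1 ^ 2 := by
  refine ⟨coeff (Finsupp.single 0 2) h,
    coeff (Finsupp.single 0 1 + Finsupp.single 1 1) h, coeff (Finsupp.single 1 2) h, ?_⟩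
  apply MvPolynomial.ext
  intro m
  have hrw : (MvPolynomial.C (coeff (Finsupp.single 0 2) h) * X 0 ^ 2 +
      MvPolynomial.C (coeff (Finsupp.single 0 1 + Finsupp.single 1 1) h) * X 0 * X 1 +
      MvPolynomial.C (coeff (Finsupp.single 1 2) h) * X 1 ^ 2 : MvPolynomial (Fin 2) ℝ)
      = monomial (Finsupp.single 0 2) (coeff (Finsupp.single 0 2) h)
      + monomial (Finsupp.single 0 1 + Finsupp.single 1 1)
          (coeff (Finsupp.single 0 1 + Finsupp.single 1 1) h)
      + monomial (Finsupp.single 1 2) (coeff (Finsupp.single 1 2) h) := by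
    rw [C_mul_X_pow_eq_monomial, C_mul_X_pow_eq_monomial]
    congr 2
    rw [mul_assoc, X, X, monomial_mul, C_mul_monomial, mul_one, mul_one]
  rw [hrw]
  simp only [coeff_add, coeff_monomial]
  have hm2 : m = Finsupp.single 0 (m 0) + Finsupp.single 1 (m 1) := by
    ext i; fin_cases i <;> simp [Finsupp.single_apply]
  have ne12 : (Finsupp.single 0 2 : Fin 2 →₀ ℕ) ≠ Finsupp.single 0 1 + Finsupp.single 1 1 := by
    intro H; simpa using DFunLike.congr_fun H 1
  have ne13 : (Finsupp.single 0 2 : Fin 2 →₀ ℕ) ≠ Finsupp.single 1 2 := by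
    intro H; simpa using DFunLike.congr_fun H 0
  have ne23 : (Finsupp.single 0 1 + Finsupp.single 1 1 : Fin 2 →₀ ℕ) ≠ Finsupp.single 1 2 := by
    intro H; simpa using DFunLike.congr_fun H 0
  by_cases hd : m 0 + m 1 = 2
  · have h0le : m 0 ≤ 2 := by omega
    interval_cases h0 : m 0
    · have h1v : m 1 = 2 := by omega
      have hm : m = Finsupp.single 1 2 := by rw [hm2, h1v]; simp
      rw [hm, if_neg ne13, if_neg ne23, if_pos rfl]; simp
    · have h1v : m 1 = 1 := by omega
      have hm : m = Finsupp.single 0 1 + Finsupp.single 1 1 := by rw [hm2, h1v]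
      rw [hm, if_neg ne12, if_pos rfl, if_neg (Ne.symm ne23)]; simp
    · have h1v : m 1 = 0 := by omega
      have hm : m = Finsupp.single 0 2 := by rw [hm2, h1v]; simp
      rw [hm, if_pos rfl, if_neg (Ne.symm ne12), if_neg (Ne.symm ne13)]; simp
  · rw [hh.coeff_eq_zero (by rw [deg2]; exact hd)]
    rw [if_neg, if_neg, if_neg]
    · simp
    · intro H; apply hd; rw [← H]; simp [Finsupp.single_apply]
    · intro H; apply hd; rw [← H]; simp [Finsupp.single_apply]
    · intro H; apply hd; rw [← H]; simp [Finsupp.single_apply]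

lemma fourthRoot {z : ℝ} (hz : 0 ≤ z) : (Real.sqrt (Real.sqrt z)) ^ 4 = z := by
  have h1 : (Real.sqrt (Real.sqrt z)) ^ 2 = Real.sqrt z := Real.sq_sqrt (Real.sqrt_nonneg z)
  calc (Real.sqrt (Real.sqrt z)) ^ 4 = ((Real.sqrt (Real.sqrt z)) ^ 2) ^ 2 := by ring
    _ = z := by rw [h1, Real.sq_sqrt hz]

lemma Q1_nonneg (α β γ : ℝ) :
    0 ≤ 6*α^2*β^2 + 4*α^3*γ + 6*γ^2*β^2 + 4*γ^3*α + 4*α^4 + 4*γ^4 := by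
  nlinarith [sq_nonneg (β*α), sq_nonneg (β*γ), sq_nonneg ((α+γ)*(α-γ)), sq_nonneg ((α+γ)^2)]

lemma Qs_nonneg {s : ℝ} (hs : -4 ≤ s) (α β γ : ℝ) :
    0 ≤ (s^2+56)*(α^4+γ^4) + (64-2*s)*(6*α^2*β^2 + 4*α^3*γ + 6*γ^2*β^2 + 4*α*γ^3)
        + 72*β^4 + 864*α*β^2*γ + 432*α^2*γ^2 := by
  rcases le_or_gt s 12 with h12 | h12
  · have t1 : 0 ≤ ((s+4)*(α-γ)^2 + 3*(s-4)*(α+γ)^2 - 24*β^2)^2 := sq_nonneg _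
    have t2 : 0 ≤ (12-s)*((s+4)*(α+γ)^4) :=
      mul_nonneg (by linarith) (mul_nonneg (by linarith) (by positivity))
    have t3 : 0 ≤ (s+28)*((α+γ)^2*β^2) := mul_nonneg (by linarith) (by positivity)
    nlinarith [t1, t2, t3]
  · rcases le_or_gt s 68 with h68 | h68
    · have t1 : 0 ≤ ((s+4)*(α-γ)^2 - 24*β^2)^2 := sq_nonneg _
      have t2 : 0 ≤ ((s-4)^2+512)*(α+γ)^4 := by positivity
      have t3 : 0 ≤ (6*s^2-96)*((α+γ)*(α-γ))^2 :=
        mul_nonneg (by nlinarith) (sq_nonneg _)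
      have t4 : 0 ≤ (3264-48*s)*((α+γ)*β)^2 := mul_nonneg (by linarith) (sq_nonneg _)
      nlinarith [t1, t2, t3, t4]
    · have t1 : 0 ≤ ((s-68)*(α+γ)^2 + (s+4)*(α-γ)^2 - 24*β^2)^2 := sq_nonneg _
      have t2 : 0 ≤ 128*((s-32)*(α+γ)^4) :=
        mul_nonneg (by norm_num) (mul_nonneg (by linarith) (by positivity))
      have t3 : 0 ≤ (4*s^2+128*s+448)*((α+γ)*(α-γ))^2 :=
        mul_nonneg (by nlinarith) (sq_nonneg _)
      nlinarith [t1, t2, t3]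

lemma evalH (a b c : ℝ) {s : ℕ} (h : Fin s → MvPolynomial (Fin 2) ℝ)
    (α β γ : Fin s → ℝ)
    (hform : ∀ k, h k = MvPolynomial.C (α k) * X 0 ^ 2 + MvPolynomial.C (β k) * X 0 * X 1 +
      MvPolynomial.C (γ k) * X 1 ^ 2)
    (hp : evenOctic a b c = ∑ k, (h k) ^ 4) :
    ∀ x : ℝ, a*x^8 + b*x^6 + c*x^4 + b*x^2 + a
      = ∑ k, (α k * x^2 + β k * x + γ k)^4 := by
  intro x
  have h1 := congrArg (eval ![x, 1]) hp
  simp only [evenOctic, map_sum, map_add, map_mul, map_pow, eval_C, eval_X,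
    Matrix.cons_val_zero, Matrix.cons_val_one, Matrix.head_cons, hform, one_pow, mul_one] at h1
  convert h1 using 2

lemma extractA (a b c : ℝ) {s : ℕ} (α β γ : Fin s → ℝ)
    (H : ∀ x : ℝ, a*x^8 + b*x^6 + c*x^4 + b*x^2 + a
      = ∑ k, (α k * x^2 + β k * x + γ k)^4) :
    a = ∑ k, (α k)^4 := by
  have key : (1/40320 : ℝ) * (∑ k, (α k * (-4:ℝ)^2 + β k * (-4:ℝ) + γ k)^4)
      + (-1/5040 : ℝ) * (∑ k, (α k * (-3:ℝ)^2 + β k * (-3:ℝ) + γ k)^4)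
      + (1/1440 : ℝ) * (∑ k, (α k * (-2:ℝ)^2 + β k * (-2:ℝ) + γ k)^4)
      + (-1/720 : ℝ) * (∑ k, (α k * (-1:ℝ)^2 + β k * (-1:ℝ) + γ k)^4)
      + (1/576 : ℝ) * (∑ k, (α k * (0:ℝ)^2 + β k * (0:ℝ) + γ k)^4)
      + (-1/720 : ℝ) * (∑ k, (α k * (1:ℝ)^2 + β k * (1:ℝ) + γ k)^4)
      + (1/1440 : ℝ) * (∑ k, (α k * (2:ℝ)^2 + β k * (2:ℝ) + γ k)^4)
      + (-1/5040 : ℝ) * (∑ k, (α k * (3:ℝ)^2 + β k * (3:ℝ) + γ k)^4)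
      + (1/40320 : ℝ) * (∑ k, (α k * (4:ℝ)^2 + β k * (4:ℝ) + γ k)^4)
      = ∑ k, (α k)^4 := by
    simp only [Finset.mul_sum, ← Finset.sum_add_distrib]
    exact Finset.sum_congr rfl fun k _ => by ring
  linear_combination (1/40320 : ℝ) * H (-4) + (-1/5040 : ℝ) * H (-3) + (1/1440 : ℝ) * H (-2) + (-1/720 : ℝ) * H (-1) + (1/576 : ℝ) * H 0 + (-1/720 : ℝ) * H 1 + (1/1440 : ℝ) * H 2 + (-1/5040 : ℝ) * H 3 + (1/40320 : ℝ) * H 4 + key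

lemma extractB6 (a b c : ℝ) {s : ℕ} (α β γ : Fin s → ℝ)
    (H : ∀ x : ℝ, a*x^8 + b*x^6 + c*x^4 + b*x^2 + a
      = ∑ k, (α k * x^2 + β k * x + γ k)^4) :
    b = ∑ k, (6*(α k)^2*(β k)^2 + 4*(α k)^3*(γ k)) := by
  have key : (-1/2880 : ℝ) * (∑ k, (α k * (-4:ℝ)^2 + β k * (-4:ℝ) + γ k)^4)
      + (1/240 : ℝ) * (∑ k, (α k * (-3:ℝ)^2 + β k * (-3:ℝ) + γ k)^4)
      + (-13/720 : ℝ) * (∑ k, (α k * (-2:ℝ)^2 + β k * (-2:ℝ) + γ k)^4)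
      + (29/720 : ℝ) * (∑ k, (α k * (-1:ℝ)^2 + β k * (-1:ℝ) + γ k)^4)
      + (-5/96 : ℝ) * (∑ k, (α k * (0:ℝ)^2 + β k * (0:ℝ) + γ k)^4)
      + (29/720 : ℝ) * (∑ k, (α k * (1:ℝ)^2 + β k * (1:ℝ) + γ k)^4)
      + (-13/720 : ℝ) * (∑ k, (α k * (2:ℝ)^2 + β k * (2:ℝ) + γ k)^4)
      + (1/240 : ℝ) * (∑ k, (α k * (3:ℝ)^2 + β k * (3:ℝ) + γ k)^4)
      + (-1/2880 : ℝ) * (∑ k, (α k * (4:ℝ)^2 + β k * (4:ℝ) + γ k)^4)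
      = ∑ k, (6*(α k)^2*(β k)^2 + 4*(α k)^3*(γ k)) := by
    simp only [Finset.mul_sum, ← Finset.sum_add_distrib]
    exact Finset.sum_congr rfl fun k _ => by ring
  linear_combination (-1/2880 : ℝ) * H (-4) + (1/240 : ℝ) * H (-3) + (-13/720 : ℝ) * H (-2) + (29/720 : ℝ) * H (-1) + (-5/96 : ℝ) * H 0 + (29/720 : ℝ) * H 1 + (-13/720 : ℝ) * H 2 + (1/240 : ℝ) * H 3 + (-1/2880 : ℝ) * H 4 + key

lemma extractC (a b c : ℝ) {s : ℕ} (α β γ : Fin s → ℝ)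
    (H : ∀ x : ℝ, a*x^8 + b*x^6 + c*x^4 + b*x^2 + a
      = ∑ k, (α k * x^2 + β k * x + γ k)^4) :
    c = ∑ k, ((β k)^4 + 12*(α k)*(β k)^2*(γ k) + 6*(α k)^2*(γ k)^2) := by
  have key : (7/5760 : ℝ) * (∑ k, (α k * (-4:ℝ)^2 + β k * (-4:ℝ) + γ k)^4)
      + (-1/60 : ℝ) * (∑ k, (α k * (-3:ℝ)^2 + β k * (-3:ℝ) + γ k)^4)
      + (169/1440 : ℝ) * (∑ k, (α k * (-2:ℝ)^2 + β k * (-2:ℝ) + γ k)^4)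
      + (-61/180 : ℝ) * (∑ k, (α k * (-1:ℝ)^2 + β k * (-1:ℝ) + γ k)^4)
      + (91/192 : ℝ) * (∑ k, (α k * (0:ℝ)^2 + β k * (0:ℝ) + γ k)^4)
      + (-61/180 : ℝ) * (∑ k, (α k * (1:ℝ)^2 + β k * (1:ℝ) + γ k)^4)
      + (169/1440 : ℝ) * (∑ k, (α k * (2:ℝ)^2 + β k * (2:ℝ) + γ k)^4)
      + (-1/60 : ℝ) * (∑ k, (α k * (3:ℝ)^2 + β k * (3:ℝ) + γ k)^4)
      + (7/5760 : ℝ) * (∑ k, (α k * (4:ℝ)^2 + β k * (4:ℝ) + γ k)^4)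
      = ∑ k, ((β k)^4 + 12*(α k)*(β k)^2*(γ k) + 6*(α k)^2*(γ k)^2) := by
    simp only [Finset.mul_sum, ← Finset.sum_add_distrib]
    exact Finset.sum_congr rfl fun k _ => by ring
  linear_combination (7/5760 : ℝ) * H (-4) + (-1/60 : ℝ) * H (-3) + (169/1440 : ℝ) * H (-2) + (-61/180 : ℝ) * H (-1) + (91/192 : ℝ) * H 0 + (-61/180 : ℝ) * H 1 + (169/1440 : ℝ) * H 2 + (-1/60 : ℝ) * H 3 + (7/5760 : ℝ) * H 4 + key

lemma extractB2 (a b c : ℝ) {s : ℕ} (α β γ : Fin s → ℝ)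
    (H : ∀ x : ℝ, a*x^8 + b*x^6 + c*x^4 + b*x^2 + a
      = ∑ k, (α k * x^2 + β k * x + γ k)^4) :
    b = ∑ k, (6*(γ k)^2*(β k)^2 + 4*(γ k)^3*(α k)) := by
  have key : (-1/1120 : ℝ) * (∑ k, (α k * (-4:ℝ)^2 + β k * (-4:ℝ) + γ k)^4)
      + (4/315 : ℝ) * (∑ k, (α k * (-3:ℝ)^2 + β k * (-3:ℝ) + γ k)^4)
      + (-1/10 : ℝ) * (∑ k, (α k * (-2:ℝ)^2 + β k * (-2:ℝ) + γ k)^4)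
      + (4/5 : ℝ) * (∑ k, (α k * (-1:ℝ)^2 + β k * (-1:ℝ) + γ k)^4)
      + (-205/144 : ℝ) * (∑ k, (α k * (0:ℝ)^2 + β k * (0:ℝ) + γ k)^4)
      + (4/5 : ℝ) * (∑ k, (α k * (1:ℝ)^2 + β k * (1:ℝ) + γ k)^4)
      + (-1/10 : ℝ) * (∑ k, (α k * (2:ℝ)^2 + β k * (2:ℝ) + γ k)^4)
      + (4/315 : ℝ) * (∑ k, (α k * (3:ℝ)^2 + β k * (3:ℝ) + γ k)^4)
      + (-1/1120 : ℝ) * (∑ k, (α k * (4:ℝ)^2 + β k * (4:ℝ) + γ k)^4)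
      = ∑ k, (6*(γ k)^2*(β k)^2 + 4*(γ k)^3*(α k)) := by
    simp only [Finset.mul_sum, ← Finset.sum_add_distrib]
    exact Finset.sum_congr rfl fun k _ => by ring
  linear_combination (-1/1120 : ℝ) * H (-4) + (4/315 : ℝ) * H (-3) + (-1/10 : ℝ) * H (-2) + (4/5 : ℝ) * H (-1) + (-205/144 : ℝ) * H 0 + (4/5 : ℝ) * H 1 + (-1/10 : ℝ) * H 2 + (4/315 : ℝ) * H 3 + (-1/1120 : ℝ) * H 4 + key

lemma extractG (a b c : ℝ) {s : ℕ} (α β γ : Fin s → ℝ)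
    (H : ∀ x : ℝ, a*x^8 + b*x^6 + c*x^4 + b*x^2 + a
      = ∑ k, (α k * x^2 + β k * x + γ k)^4) :
    a = ∑ k, (γ k)^4 := by
  have key : ∑ k, (α k * (0:ℝ)^2 + β k * 0 + γ k)^4 = ∑ k, (γ k)^4 :=
    Finset.sum_congr rfl fun k _ => by ring
  linear_combination H 0 + key

lemma suffIdentity (a b c : ℝ) (ha : 0 < a) (hb : -(4*a) ≤ b)
    (hm : b^2 - 64*a*b - 56*a^2 ≤ 36*a*c) :
    evenOctic a b c =
      (MvPolynomial.C (Real.sqrt (Real.sqrt (a/2))) * X 0 ^ 2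
        + MvPolynomial.C (Real.sqrt (Real.sqrt (a/2)) * Real.sqrt ((b+4*a)/(6*a))) * X 0 * X 1
        + MvPolynomial.C (-(Real.sqrt (Real.sqrt (a/2)))) * X 1 ^ 2) ^ 4
      + (MvPolynomial.C (Real.sqrt (Real.sqrt (a/2))) * X 0 ^ 2
        + MvPolynomial.C (-(Real.sqrt (Real.sqrt (a/2)) * Real.sqrt ((b+4*a)/(6*a)))) * X 0 * X 1
        + MvPolynomial.C (-(Real.sqrt (Real.sqrt (a/2)))) * X 1 ^ 2) ^ 4
      + (MvPolynomial.C 0 * X 0 ^ 2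
        + MvPolynomial.C (Real.sqrt (Real.sqrt (c - a*6 + a*((b+4*a)/(6*a))*12 - a*((b+4*a)/(6*a))^2)))
            * X 0 * X 1
        + MvPolynomial.C 0 * X 1 ^ 2) ^ 4 := by
  set lam := Real.sqrt (Real.sqrt (a/2)) with hlamdef
  set B2 := (b+4*a)/(6*a) with hB2def
  set bet := Real.sqrt B2 with hbetdef
  set t := c - a*6 + a*B2*12 - a*B2^2 with htdef
  set mu := Real.sqrt (Real.sqrt t) with hmudef
  have hane : a ≠ 0 := ha.ne'
  have hB2nn : 0 ≤ B2 := div_nonneg (by linarith) (by linarith)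
  have h36 : 36*a*t = 36*a*c + 64*a*b + 56*a^2 - b^2 := by
    rw [htdef, hB2def]; field_simp; ring
  have htnn : 0 ≤ t := by nlinarith [h36, ha, hm]
  have slam : lam^4*2 = a := by rw [hlamdef, fourthRoot (by linarith : (0:ℝ) ≤ a/2)]; ring
  have sbet : bet^2 = B2 := Real.sq_sqrt hB2nn
  have smu : mu^4 = t := fourthRoot htnn
  have s6 : a*B2*6 = b + a*4 := by rw [hB2def]; field_simp
  have Llam : (MvPolynomial.C lam : MvPolynomial (Fin 2) ℝ)^4 * 2 = MvPolynomial.C a := by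
    rw [← map_pow, ← map_ofNat (MvPolynomial.C : ℝ →+* MvPolynomial (Fin 2) ℝ) 2,
      ← map_mul, slam]
  have Lbet : (MvPolynomial.C bet : MvPolynomial (Fin 2) ℝ)^2 = MvPolynomial.C B2 := by
    rw [← map_pow, sbet]
  have Lmu : (MvPolynomial.C mu : MvPolynomial (Fin 2) ℝ)^4
      = MvPolynomial.C c - MvPolynomial.C a*6 + MvPolynomial.C a*MvPolynomial.C B2*12
        - MvPolynomial.C a*(MvPolynomial.C B2)^2 := by
    rw [← map_pow, smu, htdef]
    simp only [map_sub, map_add, map_mul, map_pow, map_ofNat]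
  have L6 : (MvPolynomial.C a : MvPolynomial (Fin 2) ℝ)*MvPolynomial.C B2*6
      = MvPolynomial.C b + MvPolynomial.C a*4 := by
    rw [← map_ofNat (MvPolynomial.C : ℝ →+* MvPolynomial (Fin 2) ℝ) 6,
      ← map_ofNat (MvPolynomial.C : ℝ →+* MvPolynomial (Fin 2) ℝ) 4,
      ← map_mul, ← map_mul, ← map_mul, ← map_add, s6]
  simp only [evenOctic, map_mul, map_neg, map_zero, zero_mul, zero_add, add_zero]
  linear_combination
    (-( (X 0^2 - X 1^2)^4 + 6*(X 0^2 - X 1^2)^2*(MvPolynomial.C bet * X 0 * X 1)^2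
        + (MvPolynomial.C bet * X 0 * X 1)^4 )) * Llam
    + (-(X 0^4 * X 1^4)) * Lmu
    + (-( MvPolynomial.C a*6*(X 0^2 - X 1^2)^2*X 0^2*X 1^2
        + MvPolynomial.C a*((MvPolynomial.C bet)^2 + MvPolynomial.C B2)*X 0^4*X 1^4 )) * Lbet
    + (-( (X 0^2 - X 1^2)^2*X 0^2*X 1^2 + 2*(X 0^4*X 1^4) )) * L6

lemma suffC (c : ℝ) (hc : 0 ≤ c) :
    evenOctic 0 0 c = ∑ k : Fin 1,
      ((MvPolynomial.C 0 * X 0 ^ 2 + MvPolynomial.C (Real.sqrt (Real.sqrt c)) * X 0 * X 1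
        + MvPolynomial.C 0 * X 1 ^ 2 : MvPolynomial (Fin 2) ℝ)) ^ 4 := by
  have hC : (MvPolynomial.C (Real.sqrt (Real.sqrt c)) : MvPolynomial (Fin 2) ℝ) ^ 4
      = MvPolynomial.C c := by rw [← map_pow, fourthRoot hc]
  rw [Fin.sum_univ_one]
  simp only [evenOctic, map_zero, zero_mul, zero_add, add_zero]
  linear_combination (-(X 0 ^ 4 * X 1 ^ 4) : MvPolynomial (Fin 2) ℝ) * hC

end Auxiliary

lemma mainIff (a b c : ℝ) :
    IsSumFourthPowersQuadratics (evenOctic a b c) ↔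
      ((a = 0 ∧ b = 0 ∧ 0 ≤ c) ∨
        (0 < a ∧ -(4 * a) ≤ b ∧ b ^ 2 - 64 * a * b - 56 * a ^ 2 ≤ 36 * a * c)) := by
  constructor
  · rintro ⟨s, h, hhom, hp⟩
    choose α β γ hform using fun k => quadStruct (h k) (hhom k)
    have H := evalH a b c h α β γ hform hp
    have hA := extractA a b c α β γ H
    have hG := extractG a b c α β γ H
    have hB6 := extractB6 a b c α β γ H
    have hB2 := extractB2 a b c α β γ H
    have hC := extractC a b c α β γ H
    have ha0 : 0 ≤ a := by
      rw [hA]; exact Finset.sum_nonneg fun k _ => by positivity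
    rcases eq_or_lt_of_le ha0 with haz | hap
    · -- a = 0
      left
      have hα : ∀ k, α k = 0 := by
        intro k
        have h0 : ∑ k, (α k)^4 = 0 := by rw [← hA, ← haz]
        have := (Finset.sum_eq_zero_iff_of_nonneg
          (fun i _ => by positivity : ∀ i ∈ Finset.univ, (0:ℝ) ≤ (α i)^4)).mp h0 k
          (Finset.mem_univ k)
        exact pow_eq_zero_iff (by norm_num) |>.mp this
      have hγ : ∀ k, γ k = 0 := by
        intro k
        have h0 : ∑ k, (γ k)^4 = 0 := by rw [← hG, ← haz]
        have := (Finset.sum_eq_zero_iff_of_nonneg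
          (fun i _ => by positivity : ∀ i ∈ Finset.univ, (0:ℝ) ≤ (γ i)^4)).mp h0 k
          (Finset.mem_univ k)
        exact pow_eq_zero_iff (by norm_num) |>.mp this
      refine ⟨haz.symm, ?_, ?_⟩
      · rw [hB6]
        exact Finset.sum_eq_zero fun k _ => by rw [hα k]; ring
      · rw [hC]
        apply Finset.sum_nonneg
        intro k _
        rw [hα k]
        have : (β k)^4 + 12*0*(β k)^2*(γ k) + 6*0^2*(γ k)^2 = (β k)^4 := by ring
        rw [this]
        positivity
    · -- 0 < a
      right
      have hQ1 : 0 ≤ ∑ k, (6*(α k)^2*(β k)^2 + 4*(α k)^3*(γ k) + 6*(γ k)^2*(β k)^2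
          + 4*(γ k)^3*(α k) + 4*(α k)^4 + 4*(γ k)^4) :=
        Finset.sum_nonneg fun k _ => Q1_nonneg (α k) (β k) (γ k)
      have key1 : (∑ k, (6*(α k)^2*(β k)^2 + 4*(α k)^3*(γ k)))
          + (∑ k, (6*(γ k)^2*(β k)^2 + 4*(γ k)^3*(α k)))
          + 4*(∑ k, (α k)^4) + 4*(∑ k, (γ k)^4)
          = ∑ k, (6*(α k)^2*(β k)^2 + 4*(α k)^3*(γ k) + 6*(γ k)^2*(β k)^2
          + 4*(γ k)^3*(α k) + 4*(α k)^4 + 4*(γ k)^4) := by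
        simp only [Finset.mul_sum, ← Finset.sum_add_distrib]
        exact Finset.sum_congr rfl fun k _ => by ring
      have E1 : 2*b + 8*a = ∑ k, (6*(α k)^2*(β k)^2 + 4*(α k)^3*(γ k) + 6*(γ k)^2*(β k)^2
          + 4*(γ k)^3*(α k) + 4*(α k)^4 + 4*(γ k)^4) := by
        linear_combination hB6 + hB2 + 4*hA + 4*hG + key1
      rw [← E1] at hQ1
      have hb4 : -(4*a) ≤ b := by linarith
      refine ⟨hap, hb4, ?_⟩
      have hs4 : -4 ≤ b/a := by
        rw [le_div_iff₀ hap]; linarith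
      have hQ : 0 ≤ ∑ k, (((b/a)^2+56)*((α k)^4+(γ k)^4)
          + (64-2*(b/a))*(6*(α k)^2*(β k)^2 + 4*(α k)^3*(γ k) + 6*(γ k)^2*(β k)^2
            + 4*(α k)*(γ k)^3)
          + 72*(β k)^4 + 864*(α k)*(β k)^2*(γ k) + 432*(α k)^2*(γ k)^2) :=
        Finset.sum_nonneg fun k _ => Qs_nonneg hs4 (α k) (β k) (γ k)
      have key2 : ((b/a)^2+56)*(∑ k, (α k)^4) + ((b/a)^2+56)*(∑ k, (γ k)^4)
          + (64-2*(b/a))*(∑ k, (6*(α k)^2*(β k)^2 + 4*(α k)^3*(γ k)))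
          + (64-2*(b/a))*(∑ k, (6*(γ k)^2*(β k)^2 + 4*(γ k)^3*(α k)))
          + 72*(∑ k, ((β k)^4 + 12*(α k)*(β k)^2*(γ k) + 6*(α k)^2*(γ k)^2))
          = ∑ k, (((b/a)^2+56)*((α k)^4+(γ k)^4)
          + (64-2*(b/a))*(6*(α k)^2*(β k)^2 + 4*(α k)^3*(γ k) + 6*(γ k)^2*(β k)^2
            + 4*(α k)*(γ k)^3)
          + 72*(β k)^4 + 864*(α k)*(β k)^2*(γ k) + 432*(α k)^2*(γ k)^2) := by
        simp only [Finset.mul_sum, ← Finset.sum_add_distrib]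
        exact Finset.sum_congr rfl fun k _ => by ring
      have E2 : 2*((b/a)^2+56)*a + (128-4*(b/a))*b + 72*c
          = ∑ k, (((b/a)^2+56)*((α k)^4+(γ k)^4)
          + (64-2*(b/a))*(6*(α k)^2*(β k)^2 + 4*(α k)^3*(γ k) + 6*(γ k)^2*(β k)^2
            + 4*(α k)*(γ k)^3)
          + 72*(β k)^4 + 864*(α k)*(β k)^2*(γ k) + 432*(α k)^2*(γ k)^2) := by
        linear_combination ((b/a)^2+56)*hA + ((b/a)^2+56)*hG + (64-2*(b/a))*hB6
          + (64-2*(b/a))*hB2 + 72*hC + key2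
      rw [← E2] at hQ
      have hexp : a * (2*((b/a)^2+56)*a + (128-4*(b/a))*b + 72*c)
          = -2*b^2 + 112*a^2 + 128*a*b + 72*a*c := by
        field_simp
        ring
      have h2 := mul_nonneg hap.le hQ
      rw [hexp] at h2
      linarith
  · rintro (⟨haz, hbz, hc⟩ | ⟨hap, hb, hm⟩)
    · subst haz; subst hbz
      exact ⟨1, _, fun k => quadHom _ _ _, suffC c hc⟩
    · refine ⟨3, ![MvPolynomial.C (Real.sqrt (Real.sqrt (a/2))) * X 0 ^ 2
        + MvPolynomial.C (Real.sqrt (Real.sqrt (a/2)) * Real.sqrt ((b+4*a)/(6*a))) * X 0 * X 1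
        + MvPolynomial.C (-(Real.sqrt (Real.sqrt (a/2)))) * X 1 ^ 2,
        MvPolynomial.C (Real.sqrt (Real.sqrt (a/2))) * X 0 ^ 2
        + MvPolynomial.C (-(Real.sqrt (Real.sqrt (a/2)) * Real.sqrt ((b+4*a)/(6*a)))) * X 0 * X 1
        + MvPolynomial.C (-(Real.sqrt (Real.sqrt (a/2)))) * X 1 ^ 2,
        MvPolynomial.C 0 * X 0 ^ 2
        + MvPolynomial.C (Real.sqrt (Real.sqrt (c - a*6 + a*((b+4*a)/(6*a))*12
            - a*((b+4*a)/(6*a))^2))) * X 0 * X 1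
        + MvPolynomial.C 0 * X 1 ^ 2], ?_, ?_⟩
      · intro k
        fin_cases k <;>
          simp only [Matrix.cons_val_zero, Matrix.cons_val_one, Matrix.head_cons,
            Matrix.cons_val_two, Matrix.tail_cons] <;>
          exact quadHom _ _ _
      · rw [Fin.sum_univ_three]
        simp only [Matrix.cons_val_zero, Matrix.cons_val_one, Matrix.head_cons,
          Matrix.cons_val_two, Matrix.tail_cons]
        exact suffIdentity a b c hap hb hm

/-- An even symmetric binary octic `A x⁸ + B x⁶y² + C x⁴y⁴ + B x²y⁶ + A y⁸` is a finite
sum of fourth powers of binary quadratic forms iff `A = B = 0 ∧ C ≥ 0`, or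
`A > 0 ∧ B ≥ −4A ∧ 36AC ≥ B² − 64AB − 56A²`. In particular `x⁸ + αx⁴y⁴ + y⁸` is such a
sum iff `α ≥ −14/9`. -/
theorem evenOctic_sum_fourth_powers_iff :
    (∀ a b c : ℝ,
      IsSumFourthPowersQuadratics (evenOctic a b c) ↔
        ((a = 0 ∧ b = 0 ∧ 0 ≤ c) ∨
          (0 < a ∧ -(4 * a) ≤ b ∧ b ^ 2 - 64 * a * b - 56 * a ^ 2 ≤ 36 * a * c))) ∧
    (∀ α : ℝ,
      IsSumFourthPowersQuadratics (evenOctic 1 0 α) ↔ -(14 / 9) ≤ α) := by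
  refine ⟨mainIff, fun α => (mainIff 1 0 α).trans ?_⟩
  constructor
  · rintro (⟨h1, -, -⟩ | ⟨-, -, h3⟩)
    · norm_num at h1
    · nlinarith [h3]
  · intro hα
    right
    refine ⟨one_pos, by norm_num, by nlinarith [hα]⟩
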